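/- In AQ_n (n ≥ 3), for two complement edges u ū^i and u ū^j with 2 ≤ i < j ≤ n, the vertices ū^i and ū^j have exactly 4 common neighbors if and only if j = i + 2; if j = i+1 or j > i+2 they have exactly 2 common neighbors. -/

import Mathlib

/-- Number of coordinates in which two vertices of the cube differ (Hamming distance). -/
def diffCount {n : ℕ} (x y : Fin n → Bool) : ℕ :=
  (Finset.univ.filter fun i => x i ≠ y i).card

lemma diffCount_comm {n : ℕ} (x y : Fin n → Bool) : diffCount x y = diffCount y x := by
  unfold diffCount
  congr 1
  apply Finset.filter_congr
  intro i _
  exact ne_comm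

/-- The `n`-dimensional hypercube. -/
def Qn (n : ℕ) : SimpleGraph (Fin n → Bool) where
  Adj x y := diffCount x y = 1
  symm := ⟨by intro x y h; rw [diffCount_comm]; exact h⟩
  loopless := ⟨by intro x h; simp [diffCount] at h⟩

/-- The `n`-dimensional folded hypercube. -/
def FQn (n : ℕ) : SimpleGraph (Fin n → Bool) where
  Adj x y := x ≠ y ∧ (diffCount x y = 1 ∨ diffCount x y = n)
  symm := ⟨by
    rintro x y ⟨h1, h2⟩
    exact ⟨h1.symm, by rw [diffCount_comm]; exact h2⟩⟩
  loopless := ⟨fun x h => h.1 rfl⟩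

/-- Flip bit `i` (hypercube neighbour `u^{i+1}` in 1-based notation). -/
def hFlip {n : ℕ} (u : Fin n → Bool) (i : Fin n) : Fin n → Bool :=
  fun j => if j = i then !(u j) else u j

/-- Flip bits `0,…,i` (complement neighbour `ū^{i+1}` in 1-based notation). -/
def cFlip {n : ℕ} (u : Fin n → Bool) (i : Fin n) : Fin n → Bool :=
  fun j => if j ≤ i then !(u j) else u j

lemma hFlip_hFlip {n : ℕ} (u : Fin n → Bool) (i : Fin n) : hFlip (hFlip u i) i = u := by
  funext j; simp only [hFlip]; split <;> simp

lemma cFlip_cFlip {n : ℕ} (u : Fin n → Bool) (i : Fin n) : cFlip (cFlip u i) i = u := by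
  funext j; simp only [cFlip]; split <;> simp

/-- The `n`-dimensional augmented cube. -/
def AQn (n : ℕ) : SimpleGraph (Fin n → Bool) where
  Adj x y := x ≠ y ∧ ((∃ i, y = hFlip x i) ∨ (∃ i : Fin n, 1 ≤ i.val ∧ y = cFlip x i))
  symm := ⟨by
    rintro x y ⟨h1, h2⟩
    refine ⟨h1.symm, ?_⟩
    rcases h2 with ⟨i, rfl⟩ | ⟨i, hi, rfl⟩
    · exact Or.inl ⟨i, (hFlip_hFlip x i).symm⟩
    · exact Or.inr ⟨i, hi, (cFlip_cFlip x i).symm⟩⟩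
  loopless := ⟨fun x h => h.1 rfl⟩

section AuxStmt15
variable {n : ℕ}

lemma hFlip_ne' (x : Fin n → Bool) (a : Fin n) : hFlip x a ≠ x := by
  intro h
  have := congrFun h a
  simp [hFlip] at this

lemma cFlip_ne' (x : Fin n → Bool) (a : Fin n) : cFlip x a ≠ x := by
  intro h
  have := congrFun h ⟨0, a.pos⟩
  simp [cFlip, Fin.le_def] at this

lemma eq_hFlip_iff (x w : Fin n → Bool) (a : Fin n) :
    w = hFlip x a ↔ ∀ k, ((w k ≠ x k) ↔ k = a) := by
  constructor
  · rintro rfl k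
    simp only [hFlip]
    split <;> simp_all
  · intro h
    funext k
    simp only [hFlip]
    by_cases hk : k = a
    · subst hk
      rw [if_pos rfl]
      have := (h k).mpr rfl
      cases hw : w k <;> cases hx : x k <;> simp_all
    · rw [if_neg hk]
      by_contra hne
      exact hk ((h k).mp hne)

lemma eq_cFlip_iff (x w : Fin n → Bool) (a : Fin n) :
    w = cFlip x a ↔ ∀ k, ((w k ≠ x k) ↔ k ≤ a) := by
  constructor
  · rintro rfl k
    simp only [cFlip]
    split <;> simp_all
  · intro h
    funext k
    simp only [cFlip]
    by_cases hk : k ≤ a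
    · rw [if_pos hk]
      have := (h k).mpr hk
      cases hw : w k <;> cases hx : x k <;> simp_all
    · rw [if_neg hk]
      by_contra hne
      exact hk ((h k).mp hne)

lemma adj_iff (x w : Fin n → Bool) :
    (AQn n).Adj x w ↔ ((∃ a, ∀ k, ((w k ≠ x k) ↔ k = a)) ∨
      (∃ a : Fin n, 1 ≤ a.val ∧ ∀ k, ((w k ≠ x k) ↔ k ≤ a))) := by
  constructor
  · rintro ⟨hne, ⟨a, rfl⟩ | ⟨a, ha, rfl⟩⟩
    · exact Or.inl ⟨a, (eq_hFlip_iff x _ a).mp rfl⟩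
    · exact Or.inr ⟨a, ha, (eq_cFlip_iff x _ a).mp rfl⟩
  · rintro (⟨a, h⟩ | ⟨a, ha, h⟩)
    · have hw := (eq_hFlip_iff x w a).mpr h
      exact ⟨by rw [hw]; exact (hFlip_ne' x a).symm, Or.inl ⟨a, hw⟩⟩
    · have hw := (eq_cFlip_iff x w a).mpr h
      exact ⟨by rw [hw]; exact (cFlip_ne' x a).symm, Or.inr ⟨a, ha, hw⟩⟩

lemma cFlip_ne_cFlip (u : Fin n → Bool) (i j : Fin n) (hij : i.val < j.val) (k : Fin n) :
    (cFlip u i k ≠ cFlip u j k) ↔ (i.val < k.val ∧ k.val ≤ j.val) := by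
  simp only [cFlip, Fin.le_def]
  split_ifs <;> simp <;> omega

lemma key3 {P Q R : Prop} {a b c : Bool} (h1 : (a ≠ b) ↔ P) (h2 : (a ≠ c) ↔ Q)
    (h3 : (b ≠ c) ↔ R) : P ↔ (Q ↔ ¬ R) := by
  rw [← h1, ← h2, ← h3]
  revert h1 h2 h3
  cases a <;> cases b <;> cases c <;> simp <;> tauto

end AuxStmt15
section MainStmt15
variable {n : ℕ}

lemma cFlip_comm' (u : Fin n → Bool) (i j : Fin n) :
    cFlip (cFlip u i) j = cFlip (cFlip u j) i := by
  funext k; simp only [cFlip]; split_ifs <;> simp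

lemma common_subset (u : Fin n → Bool) (i j : Fin n)
    (hi : 1 ≤ i.val) (hij : i.val < j.val) (w : Fin n → Bool)
    (hw : w ∈ (AQn n).neighborSet (cFlip u i) ∩ (AQn n).neighborSet (cFlip u j)) :
    w = u ∨ w = cFlip (cFlip u i) j ∨
      (j.val = i.val + 2 ∧
        (w = hFlip (cFlip u i) ⟨i.val + 1, Nat.lt_of_le_of_lt hij j.isLt⟩
          ∨ w = hFlip (cFlip u i) j)) := by
  obtain ⟨h1, h2⟩ := hw
  rw [SimpleGraph.mem_neighborSet, adj_iff] at h1 h2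
  have hR : ∀ k : Fin n, ((cFlip u i k ≠ cFlip u j k) ↔ (i.val < k.val ∧ k.val ≤ j.val)) :=
    cFlip_ne_cFlip u i j hij
  have hjn := j.isLt
  have hin := i.isLt
  rcases h1 with ⟨a, ha⟩ | ⟨a, ha1, ha⟩ <;> rcases h2 with ⟨b, hb⟩ | ⟨b, hb1, hb⟩
  · -- hFlip / hFlip
    have H : ∀ m : ℕ, m < n →
        (m = a.val ↔ ((m = b.val) ↔ ¬(i.val < m ∧ m ≤ j.val))) := by
      intro m hm
      have := key3 (ha ⟨m, hm⟩) (hb ⟨m, hm⟩) (hR ⟨m, hm⟩)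
      simpa only [Fin.ext_iff] using this
    have Ha := H a.val a.isLt
    have Hb := H b.val b.isLt
    have H1 := H (i.val + 1) (by omega)
    by_cases hj2 : j.val = i.val + 2
    · have H2 := H (i.val + 2) (by omega)
      have hav : a.val = i.val + 1 ∨ a.val = j.val := by omega
      refine Or.inr (Or.inr ⟨hj2, ?_⟩)
      rcases hav with h | h
      · exact Or.inl (by
          rw [(eq_hFlip_iff _ w a).mpr ha,
            show a = (⟨i.val + 1, Nat.lt_of_le_of_lt hij j.isLt⟩ : Fin n) from Fin.ext h])
      · exact Or.inr (by rw [(eq_hFlip_iff _ w a).mpr ha, show a = j from Fin.ext h])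
    · exfalso
      rcases Nat.lt_or_ge j.val (i.val + 2) with h | h
      · omega
      · have H2 := H (i.val + 2) (by omega)
        have H3 := H (i.val + 3) (by omega)
        omega
  · -- hFlip / cFlip : impossible
    exfalso
    have H : ∀ m : ℕ, m < n →
        (m = a.val ↔ ((m ≤ b.val) ↔ ¬(i.val < m ∧ m ≤ j.val))) := by
      intro m hm
      have := key3 (ha ⟨m, hm⟩) (hb ⟨m, hm⟩) (hR ⟨m, hm⟩)
      simpa only [Fin.ext_iff, Fin.le_def] using this
    have H0 := H 0 (by omega)
    have Hi := H i.val (by omega)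
    have H1 := H (i.val + 1) (by omega)
    omega
  · -- cFlip / hFlip : impossible
    exfalso
    have H : ∀ m : ℕ, m < n →
        (m ≤ a.val ↔ ((m = b.val) ↔ ¬(i.val < m ∧ m ≤ j.val))) := by
      intro m hm
      have := key3 (ha ⟨m, hm⟩) (hb ⟨m, hm⟩) (hR ⟨m, hm⟩)
      simpa only [Fin.ext_iff, Fin.le_def] using this
    have H0 := H 0 (by omega)
    have Hi := H i.val (by omega)
    have H1 := H (i.val + 1) (by omega)
    omega
  · -- cFlip / cFlip
    have H : ∀ m : ℕ, m < n →
        (m ≤ a.val ↔ ((m ≤ b.val) ↔ ¬(i.val < m ∧ m ≤ j.val))) := by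
      intro m hm
      have := key3 (ha ⟨m, hm⟩) (hb ⟨m, hm⟩) (hR ⟨m, hm⟩)
      simpa only [Fin.le_def] using this
    have Ha := H a.val a.isLt
    have Hb := H b.val b.isLt
    have Hi := H i.val (by omega)
    have H1 := H (i.val + 1) (by omega)
    have Hj := H j.val (by omega)
    have hav : a.val = i.val ∨ a.val = j.val := by omega
    rcases hav with h | h
    · left
      rw [(eq_cFlip_iff _ w a).mpr ha, show a = i from Fin.ext h, cFlip_cFlip]
    · right; left
      rw [(eq_cFlip_iff _ w a).mpr ha, show a = j from Fin.ext h]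

end MainStmt15
section MemStmt15
variable {n : ℕ}

lemma flip_eq1 (u : Fin n → Bool) (i j : Fin n) (hj2 : j.val = i.val + 2)
    (hn : i.val + 1 < n) :
    hFlip (cFlip u i) ⟨i.val + 1, hn⟩ = hFlip (cFlip u j) j := by
  funext k
  have hk := k.isLt
  have hA : (⟨i.val + 1, hn⟩ : Fin n).val = i.val + 1 := rfl
  simp only [hFlip, cFlip, Fin.ext_iff, Fin.le_def, hA]
  split_ifs <;> first | (exfalso; omega) | simp

lemma flip_eq2 (u : Fin n → Bool) (i j : Fin n) (hj2 : j.val = i.val + 2)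
    (hn : i.val + 1 < n) :
    hFlip (cFlip u i) j = hFlip (cFlip u j) ⟨i.val + 1, hn⟩ := by
  funext k
  have hk := k.isLt
  have hA : (⟨i.val + 1, hn⟩ : Fin n).val = i.val + 1 := rfl
  simp only [hFlip, cFlip, Fin.ext_iff, Fin.le_def, hA]
  split_ifs <;> first | (exfalso; omega) | simp

lemma mem_u (u : Fin n → Bool) (i j : Fin n) (hi : 1 ≤ i.val) (hij : i.val < j.val) :
    u ∈ (AQn n).neighborSet (cFlip u i) ∩ (AQn n).neighborSet (cFlip u j) :=
  ⟨⟨cFlip_ne' u i, Or.inr ⟨i, hi, (cFlip_cFlip u i).symm⟩⟩,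
   ⟨cFlip_ne' u j, Or.inr ⟨j, by omega, (cFlip_cFlip u j).symm⟩⟩⟩

lemma mem_v (u : Fin n → Bool) (i j : Fin n) (hi : 1 ≤ i.val) (hij : i.val < j.val) :
    cFlip (cFlip u i) j ∈ (AQn n).neighborSet (cFlip u i) ∩ (AQn n).neighborSet (cFlip u j) := by
  refine ⟨⟨(cFlip_ne' (cFlip u i) j).symm, Or.inr ⟨j, by omega, rfl⟩⟩, ?_⟩
  rw [cFlip_comm']
  exact ⟨(cFlip_ne' (cFlip u j) i).symm, Or.inr ⟨i, hi, rfl⟩⟩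

lemma mem_w1 (u : Fin n → Bool) (i j : Fin n) (hj2 : j.val = i.val + 2)
    (hn : i.val + 1 < n) :
    hFlip (cFlip u i) ⟨i.val + 1, hn⟩ ∈
      (AQn n).neighborSet (cFlip u i) ∩ (AQn n).neighborSet (cFlip u j) := by
  refine ⟨⟨(hFlip_ne' (cFlip u i) _).symm, Or.inl ⟨_, rfl⟩⟩, ?_⟩
  rw [flip_eq1 u i j hj2 hn]
  exact ⟨(hFlip_ne' (cFlip u j) j).symm, Or.inl ⟨j, rfl⟩⟩

lemma mem_w2 (u : Fin n → Bool) (i j : Fin n) (hj2 : j.val = i.val + 2)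
    (hn : i.val + 1 < n) :
    hFlip (cFlip u i) j ∈
      (AQn n).neighborSet (cFlip u i) ∩ (AQn n).neighborSet (cFlip u j) := by
  refine ⟨⟨(hFlip_ne' (cFlip u i) _).symm, Or.inl ⟨_, rfl⟩⟩, ?_⟩
  rw [flip_eq2 u i j hj2 hn]
  exact ⟨(hFlip_ne' (cFlip u j) _).symm, Or.inl ⟨_, rfl⟩⟩

end MemStmt15
/-- for two complement edges `u ū^i`, `u ū^j` of `AQ_n` (`n ≥ 3`) with
`i < j` (indices `i j : Fin n`, `1 ≤ i.val`, encoding 1-based bits `≥ 2`), `ū^i` and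
`ū^j` have exactly 4 common neighbours iff `j = i + 2`; if `j = i+1` or `j > i+2` they
have exactly 2 common neighbours. -/
theorem stmt15 (n : ℕ) (hn : 3 ≤ n) (u : Fin n → Bool) (i j : Fin n)
    (hi : 1 ≤ i.val) (hij : i.val < j.val) :
    (((AQn n).neighborSet (cFlip u i) ∩ (AQn n).neighborSet (cFlip u j)).ncard = 4 ↔
      j.val = i.val + 2) ∧
    (j.val = i.val + 1 ∨ i.val + 2 < j.val →
      ((AQn n).neighborSet (cFlip u i) ∩ (AQn n).neighborSet (cFlip u j)).ncard = 2) := by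
  have hjn := j.isLt
  have hn1 : i.val + 1 < n := Nat.lt_of_le_of_lt hij j.isLt
  have hA : (⟨i.val + 1, hn1⟩ : Fin n).val = i.val + 1 := rfl
  have hk0 : (0 : ℕ) < n := by omega
  have hB : (⟨0, hk0⟩ : Fin n).val = 0 := rfl
  have huv : u ≠ cFlip (cFlip u i) j := by
    intro h
    have h2 := congrFun h ⟨i.val + 1, hn1⟩
    clear h
    simp only [cFlip, Fin.le_def, hA] at h2
    split_ifs at h2 <;> first | omega | simp_all
  have huw1 : u ≠ hFlip (cFlip u i) ⟨i.val + 1, hn1⟩ := by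
    intro h
    have h2 := congrFun h ⟨0, hk0⟩
    clear h
    simp only [hFlip, cFlip, Fin.ext_iff, Fin.le_def, hA, hB] at h2
    split_ifs at h2 <;> first | omega | simp_all
  have huw2 : u ≠ hFlip (cFlip u i) j := by
    intro h
    have h2 := congrFun h ⟨0, hk0⟩
    clear h
    simp only [hFlip, cFlip, Fin.ext_iff, Fin.le_def, hB] at h2
    split_ifs at h2 <;> first | omega | simp_all
  have hvw1 : cFlip (cFlip u i) j ≠ hFlip (cFlip u i) ⟨i.val + 1, hn1⟩ := by
    intro h
    have h2 := congrFun h ⟨0, hk0⟩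
    clear h
    simp only [hFlip, cFlip, Fin.ext_iff, Fin.le_def, hA, hB] at h2
    split_ifs at h2 <;> first | omega | simp_all
  have hvw2 : cFlip (cFlip u i) j ≠ hFlip (cFlip u i) j := by
    intro h
    have h2 := congrFun h ⟨0, hk0⟩
    clear h
    simp only [hFlip, cFlip, Fin.ext_iff, Fin.le_def, hB] at h2
    split_ifs at h2 <;> first | omega | simp_all
  have hsub := common_subset u i j hi hij
  have hpart2 : j.val = i.val + 1 ∨ i.val + 2 < j.val →
      ((AQn n).neighborSet (cFlip u i) ∩ (AQn n).neighborSet (cFlip u j)).ncard = 2 := by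
    intro h2
    have hS : ((AQn n).neighborSet (cFlip u i) ∩ (AQn n).neighborSet (cFlip u j))
        = {u, cFlip (cFlip u i) j} := by
      ext w
      simp only [Set.mem_insert_iff, Set.mem_singleton_iff]
      constructor
      · intro hw
        rcases hsub w hw with h | h | ⟨hj2, _⟩
        · exact Or.inl h
        · exact Or.inr h
        · omega
      · rintro (rfl | rfl)
        · exact mem_u _ i j hi hij
        · exact mem_v _ i j hi hij
    rw [hS, Set.ncard_pair huv]
  refine ⟨⟨?_, ?_⟩, hpart2⟩
  · intro h4
    by_contra hne
    have := hpart2 (by omega)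
    omega
  · intro hj2
    have hw1w2 : hFlip (cFlip u i) ⟨i.val + 1, hn1⟩ ≠ hFlip (cFlip u i) j := by
      intro h
      have h2 := congrFun h ⟨i.val + 1, hn1⟩
      simp only [hFlip, cFlip, Fin.ext_iff, Fin.le_def, hA] at h2
      split_ifs at h2 <;> first | omega | simp_all
    have hS : ((AQn n).neighborSet (cFlip u i) ∩ (AQn n).neighborSet (cFlip u j))
        = {u, cFlip (cFlip u i) j, hFlip (cFlip u i) ⟨i.val + 1, hn1⟩,
            hFlip (cFlip u i) j} := by
      ext w
      simp only [Set.mem_insert_iff, Set.mem_singleton_iff]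
      constructor
      · intro hw
        rcases hsub w hw with h | h | ⟨_, h | h⟩
        · exact Or.inl h
        · exact Or.inr (Or.inl h)
        · exact Or.inr (Or.inr (Or.inl h))
        · exact Or.inr (Or.inr (Or.inr h))
      · rintro (rfl | rfl | rfl | rfl)
        · exact mem_u _ i j hi hij
        · exact mem_v _ i j hi hij
        · exact mem_w1 _ i j hj2 hn1
        · exact mem_w2 _ i j hj2 hn1
    rw [hS]
    rw [Set.ncard_insert_of_notMem (by simp [huv, huw1, huw2]) (Set.toFinite _),
        Set.ncard_insert_of_notMem (by simp [hvw1, hvw2]) (Set.toFinite _),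
        Set.ncard_pair hw1w2]
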